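/- Let n ≥ 1 and N = 2^n + 1. An n-element set A of positive integers is sumset-distinct modulo N if and only if there exist an integer λ coprime to N and signs ε_0, ε_1, …, ε_{n-1} ∈ {1, -1} such that the image of A in ℤ/Nℤ equals { ε_i · λ · 2^i (mod N) : 0 ≤ i ≤ n-1 }. -/

import Mathlib

/-- An `n`-element set `A` of positive integers is *sumset-distinct modulo `N`*
if all subset sums (including the empty sum) are pairwise distinct modulo `N`. -/
def SumsetDistinctMod (N : ℕ) (A : Finset ℕ) : Prop :=
  ∀ B ⊆ A, ∀ C ⊆ A, (∑ x ∈ B, x) % N = (∑ x ∈ C, x) % N → B = C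


lemma digits_zero (m : ℕ) (c : ℕ → ℤ) (hc : ∀ i, c i = 1 ∨ c i = 0 ∨ c i = -1)
    (h : ∑ i ∈ Finset.range m, c i * 2 ^ i = 0) : ∀ i < m, c i = 0 := by
  induction m generalizing c with
  | zero => omega
  | succ m ih =>
    rw [Finset.sum_range_succ'] at h
    have key : ∑ i ∈ Finset.range m, c (i + 1) * 2 ^ (i + 1)
        = 2 * ∑ i ∈ Finset.range m, c (i + 1) * 2 ^ i := by
      rw [Finset.mul_sum]; exact Finset.sum_congr rfl fun i _ => by ring
    rw [key] at h
    have h0 : c 0 = 0 := by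
      have := hc 0
      omega
    have h1 : ∑ i ∈ Finset.range m, c (i + 1) * 2 ^ i = 0 := by omega
    intro i hi
    match i with
    | 0 => exact h0
    | j + 1 => exact ih (fun i => c (i + 1)) (fun i => hc (i + 1)) h1 j (by omega)

-- matching lemma
lemma matching_lemma (M d : ℕ) (hd : 0 < d) (hdM : d ≤ M) (s : ℕ → Prop)
    (h1 : ∀ j < M, s j → j + d < M ∧ ¬ s (j + d))
    (h2 : ∀ j < M, ¬ s j → d ≤ j ∧ s (j - d)) :
    d ∣ M ∧ 2 ∣ M / d := by
  have hM : 0 < M := lt_of_lt_of_le hd hdM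
  have pattern : ∀ j < M, s j ↔ 2 ∣ j / d := by
    intro j hj
    induction j using Nat.strong_induction_on with
    | _ j ih =>
      by_cases hjd : j < d
      · have : j / d = 0 := Nat.div_eq_of_lt hjd
        rw [this]
        simp only [Nat.dvd_zero, iff_true]
        by_contra hs
        exact absurd (h2 j hj hs).1 (by omega)
      · push_neg at hjd
        have hlt : j - d < j := by omega
        have hprev := ih (j - d) hlt (by omega)
        have halt : s j ↔ ¬ s (j - d) := by
          constructor
          · intro hs hps
            have := h1 (j - d) (by omega) hps
            rw [Nat.sub_add_cancel hjd] at this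
            exact this.2 hs
          · intro hns
            by_contra hs
            exact hns (h2 j hj hs).2
        rw [halt, hprev]
        have heq : j / d = (j - d) / d + 1 := by
          rw [Nat.div_eq_sub_div hd hjd]
        rw [heq]
        omega
  -- every j < M with even block satisfies j + d < M
  have push : ∀ j < M, 2 ∣ j / d → j + d < M := fun j hj he => (h1 j hj ((pattern j hj).mpr he)).1
  set q := (M - 1) / d with hq
  have hqodd : ¬ 2 ∣ q := by
    intro hqe
    have := push (M - 1) (by omega) hqe
    omega
  have hq1 : 1 ≤ q := by
    rcases Nat.eq_zero_or_pos q with h0 | h1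
    · rw [h0] at hqodd; omega
    · exact h1
  have hmod : d * q + (M - 1) % d = M - 1 := Nat.div_add_mod (M - 1) d
  have hrlt : (M - 1) % d < d := Nat.mod_lt _ hd
  have hc : q * d = d * q := Nat.mul_comm q d
  have hdq : d ≤ q * d := Nat.le_mul_of_pos_left d hq1
  have e3 : (q - 1) * d = q * d - d := Nat.sub_mul q 1 d |>.trans (by rw [Nat.one_mul])
  have hblock : (q * d - 1) / d = q - 1 := by
    apply Nat.div_eq_of_lt_le
    · omega
    · have h4 : (q - 1 + 1) * d = (q - 1) * d + d := by ring
      omega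
  have hstep : q * d - 1 + d < M := by
    apply push _ (by omega)
    rw [hblock]; omega
  have hMeq : M = q * d + d := by omega
  refine ⟨⟨q + 1, by rw [hMeq]; ring⟩, ?_⟩
  have : M / d = q + 1 := by
    rw [hMeq]
    rw [show q * d + d = (q+1) * d by ring, Nat.mul_div_cancel _ hd]
  omega

lemma sumpow (m : ℕ) : ∑ i ∈ Finset.range m, (2:ℤ)^i = 2^m - 1 := by
  induction m with
  | zero => simp
  | succ m ih => rw [Finset.sum_range_succ, ih]; ring

lemma abs_lt_dvd_zero (a b : ℤ) (h : b ∣ a) (h2 : |a| < b) : a = 0 :=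
  Int.eq_zero_of_abs_lt_dvd h h2

section Back
variable {n N : ℕ}

lemma key_st (hn : 1 ≤ n) (hN : N = 2^n+1) (ε : ℕ → ℤ) (hε : ∀ i < n, ε i = 1 ∨ ε i = -1)
    (S T : Finset ℕ) (hS : S ⊆ Finset.range n) (hT : T ⊆ Finset.range n)
    (h : ∑ i ∈ S, (ε i : ZMod N) * 2^i = ∑ i ∈ T, (ε i : ZMod N) * 2^i) : S = T := by
  set c : ℕ → ℤ := fun i => (if i ∈ S then ε i else 0) - (if i ∈ T then ε i else 0) with hc
  have hvals : ∀ i, c i = 1 ∨ c i = 0 ∨ c i = -1 := by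
    intro i
    by_cases h3 : i < n
    · rcases hε i h3 with he | he <;> by_cases h1 : i ∈ S <;> by_cases h2 : i ∈ T <;>
        simp [hc, h1, h2, he]
    · have h1 : i ∉ S := fun m => h3 (Finset.mem_range.mp (hS m))
      have h2 : i ∉ T := fun m => h3 (Finset.mem_range.mp (hT m))
      simp [hc, h1, h2]
  have hite : ∀ (U : Finset ℕ), U ⊆ Finset.range n →
      ∑ i ∈ Finset.range n, (if i ∈ U then (ε i : ZMod N) else 0) * 2 ^ i
        = ∑ i ∈ U, (ε i : ZMod N) * 2 ^ i := by
    intro U hU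
    rw [Finset.sum_congr rfl (fun x _ => ite_mul (x ∈ U) ((ε x : ZMod N)) 0 (2^x))]
    simp only [zero_mul]
    rw [Finset.sum_ite_mem, Finset.inter_eq_right.mpr hU]
  have hcast : ((∑ i ∈ Finset.range n, c i * 2 ^ i : ℤ) : ZMod N) = 0 := by
    push_cast [hc]
    rw [Finset.sum_congr rfl (fun x _ => sub_mul (if x ∈ S then ((ε x : ℤ) : ZMod N) else 0)
      (if x ∈ T then ((ε x : ℤ) : ZMod N) else 0) (2^x)), Finset.sum_sub_distrib]
    rw [hite S hS, hite T hT, h, sub_self]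
  have hdvd : (N:ℤ) ∣ ∑ i ∈ Finset.range n, c i * 2 ^ i :=
    (ZMod.intCast_zmod_eq_zero_iff_dvd _ _).mp hcast
  have hbound : |∑ i ∈ Finset.range n, c i * 2 ^ i| ≤ 2^n - 1 := by
    calc |∑ i ∈ Finset.range n, c i * 2 ^ i| ≤ ∑ i ∈ Finset.range n, |c i * 2 ^ i| :=
          Finset.abs_sum_le_sum_abs _ _
    _ ≤ ∑ i ∈ Finset.range n, 2 ^ i := by
        apply Finset.sum_le_sum
        intro i _
        rw [abs_mul, abs_pow, abs_two]
        have h1 : |c i| ≤ 1 := by rcases hvals i with h | h | h <;> simp [h]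
        calc |c i| * 2^i ≤ 1 * 2^i := by
              apply mul_le_mul_of_nonneg_right h1; positivity
        _ = 2^i := one_mul _
    _ = 2^n - 1 := sumpow n
  have hzero : ∑ i ∈ Finset.range n, c i * 2 ^ i = 0 := by
    apply abs_lt_dvd_zero _ _ hdvd
    have : ((N:ℕ):ℤ) = 2^n + 1 := by rw [hN]; push_cast; ring
    omega
  have hz := digits_zero n c hvals hzero
  ext i
  by_cases h3 : i < n
  · have hci := hz i h3
    rcases hε i h3 with he | he <;> by_cases h1 : i ∈ S <;> by_cases h2 : i ∈ T <;>
      simp [hc, h1, h2, he] at hci ⊢ <;> assumption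
  · constructor
    · intro h1; exact absurd (Finset.mem_range.mp (hS h1)) h3
    · intro h2; exact absurd (Finset.mem_range.mp (hT h2)) h3
end Back

section Back2
variable {n N : ℕ}

lemma backward (hn : 1 ≤ n) (hN : N = 2^n+1) (A : Finset ℕ) (hcard : A.card = n) (lam : ℤ)
    (hlam : Int.gcd lam N = 1) (ε : ℕ → ℤ) (hε : ∀ i < n, ε i = 1 ∨ ε i = -1)
    (himg : A.image (fun a : ℕ => (a : ZMod N)) =
      (Finset.range n).image (fun i => (ε i : ZMod N) * (lam : ZMod N) * 2^i)) :
    SumsetDistinctMod N A := by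
  haveI : NeZero N := ⟨by rw [hN]; exact Nat.succ_ne_zero _⟩
  set ι : ℕ → ZMod N := fun a => (a : ZMod N) with hι
  set g : ℕ → ZMod N := fun i => (ε i : ZMod N) * (lam : ZMod N) * 2^i with hg
  have hunit : IsUnit ((lam : ZMod N)) := by
    obtain ⟨u, v, huv⟩ := Int.isCoprime_iff_gcd_eq_one.mpr hlam
    apply IsUnit.of_mul_eq_one ((u : ZMod N))
    have h2 : ((u * lam + v * N : ℤ) : ZMod N) = 1 := by rw [huv]; simp
    push_cast at h2
    rw [ZMod.natCast_self, mul_zero, add_zero] at h2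
    rw [mul_comm]; exact h2
  have ginj : ∀ i ∈ Finset.range n, ∀ j ∈ Finset.range n, g i = g j → i = j := by
    intro i hi j hj hij
    have h2 := hunit.mul_left_cancel
      (show (lam:ZMod N) * ((ε i:ZMod N)*2^i) = (lam:ZMod N) * ((ε j:ZMod N)*2^j) by
        linear_combination hij)
    have h3 : ({i} : Finset ℕ) = {j} := by
      apply key_st hn hN ε hε _ _ (Finset.singleton_subset_iff.mpr hi)
        (Finset.singleton_subset_iff.mpr hj)
      rw [Finset.sum_singleton, Finset.sum_singleton]
      exact h2
    exact Finset.singleton_inj.mp h3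
  have hinjA : ∀ a ∈ A, ∀ b ∈ A, ι a = ι b → a = b := by
    have hcardim : (A.image ι).card = A.card := by
      rw [himg, Finset.card_image_of_injOn (fun i hi j hj => ginj i hi j hj),
        Finset.card_range, hcard]
    intro a ha b hb hab
    exact Finset.injOn_of_card_image_eq hcardim ha hb hab
  -- image description of subsets
  have im_eq : ∀ D ⊆ A, D.image ι =
      ((Finset.range n).filter (fun i => g i ∈ D.image ι)).image g := by
    intro D hD
    apply Finset.Subset.antisymm
    · intro x hx
      have hx2 : x ∈ (Finset.range n).image g := by
        rw [← himg]
        exact Finset.image_subset_image hD hx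
      obtain ⟨i, hi, rfl⟩ := Finset.mem_image.mp hx2
      exact Finset.mem_image.mpr ⟨i, Finset.mem_filter.mpr ⟨hi, hx⟩, rfl⟩
    · intro x hx
      obtain ⟨i, hi, rfl⟩ := Finset.mem_image.mp hx
      exact (Finset.mem_filter.mp hi).2
  have sum_eq : ∀ D ⊆ A, ((∑ x ∈ D, x : ℕ) : ZMod N) =
      (lam : ZMod N) * ∑ i ∈ (Finset.range n).filter (fun i => g i ∈ D.image ι),
        (ε i : ZMod N) * 2^i := by
    intro D hD
    set F := (Finset.range n).filter (fun i => g i ∈ D.image ι) with hF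
    have e1 : ((∑ x ∈ D, x : ℕ) : ZMod N) = ∑ x ∈ D, ι x := by push_cast; rfl
    have e2 : ∑ x ∈ D.image ι, x = ∑ x ∈ D, ι x :=
      Finset.sum_image (fun a ha b hb => hinjA a (hD ha) b (hD hb))
    have e3 : ∑ x ∈ F.image g, x = ∑ i ∈ F, g i :=
      Finset.sum_image (fun a ha b hb => ginj a (Finset.mem_of_mem_filter a ha) b
        (Finset.mem_of_mem_filter b hb))
    have him : D.image ι = F.image g := im_eq D hD
    calc ((∑ x ∈ D, x : ℕ) : ZMod N) = ∑ x ∈ D, ι x := e1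
    _ = ∑ x ∈ D.image ι, x := e2.symm
    _ = ∑ i ∈ F, g i := by rw [him, e3]
    _ = (lam : ZMod N) * ∑ i ∈ F, (ε i : ZMod N) * 2^i := by
        rw [Finset.mul_sum]
        exact Finset.sum_congr rfl (fun i _ => by rw [hg]; ring)
  -- main
  intro B hB C hC h
  have hcast : ((∑ x ∈ B, x : ℕ) : ZMod N) = ((∑ x ∈ C, x : ℕ) : ZMod N) := by
    rw [ZMod.natCast_eq_natCast_iff]; exact h
  rw [sum_eq B hB, sum_eq C hC] at hcast
  have hfeq := key_st hn hN ε hε _ _ (Finset.filter_subset _ _) (Finset.filter_subset _ _)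
    (hunit.mul_left_cancel hcast)
  have himeq : B.image ι = C.image ι := by rw [im_eq B hB, im_eq C hC, hfeq]
  ext a
  constructor
  · intro ha
    have : ι a ∈ C.image ι := himeq ▸ Finset.mem_image_of_mem ι ha
    obtain ⟨c, hc, hca⟩ := Finset.mem_image.mp this
    exact hinjA c (hC hc) a (hB ha) hca ▸ hc
  · intro ha
    have : ι a ∈ B.image ι := himeq ▸ Finset.mem_image_of_mem ι ha
    obtain ⟨c, hc, hca⟩ := Finset.mem_image.mp this
    exact hinjA c (hB hc) a (hC ha) hca ▸ hc

end Back2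

lemma cycle_lemma (n N : ℕ) (hn : 1 ≤ n) (hN : N = 2^n + 1)
    (a t : ZMod N) (V0 : Finset (ZMod N))
    (hmem : ∀ x : ZMod N, x ≠ t ↔ (x ∈ V0 ∨ x - a ∈ V0))
    (hdis : ∀ x : ZMod N, x ∈ V0 → x - a ∈ V0 → False) :
    (∀ k : ℕ, 0 < k → k < N → ((k : ℕ) : ZMod N) * a ≠ 0) ∧
    (∀ x : ZMod N, x ∈ V0 ↔ ∃ k < 2^(n-1), x = t + ((2*k+1 : ℕ) : ZMod N) * a) := by
  haveI : NeZero N := ⟨by rw [hN]; exact Nat.succ_ne_zero _⟩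
  haveI : Fact (1 < N) := ⟨by
    rw [hN]; have := Nat.one_le_two_pow (n := n); omega⟩
  have ht : t ∉ V0 := fun h => (hmem t).mpr (Or.inl h) rfl
  have hta : t - a ∉ V0 := fun h => (hmem t).mpr (Or.inr h) rfl
  have ha : a ≠ 0 := by
    intro h0
    have h1 : (t + 1) ≠ t := by
      intro h
      exact one_ne_zero (by linear_combination h : (1:ZMod N) = 0)
    have h2 := (hmem (t+1)).mp h1
    rw [h0, sub_zero] at h2
    have h3 : t + 1 ∈ V0 := h2.elim id id
    exact hdis (t+1) h3 (by rw [h0, sub_zero]; exact h3)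
  have R1 : ∀ x, x ∈ V0 → x + a ≠ t ∧ x + a ∉ V0 := by
    intro x hx
    constructor
    · intro he
      apply hta
      have : t - a = x := by linear_combination -he
      rwa [this]
    · intro h2
      exact hdis (x+a) h2 (by rwa [add_sub_cancel_right])
  have R2 : ∀ x, x ≠ t → x ∉ V0 → x - a ∈ V0 := fun x hxt hx =>
    ((hmem x).mp hxt).resolve_left hx
  have claim1 : ∀ i : ℕ, (∀ j : ℕ, 1 ≤ j → j ≤ i → ((j:ℕ) : ZMod N) * a ≠ 0) →
      ((t + (i : ZMod N) * a ∈ V0) ↔ Odd i) := by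
    intro i
    induction i with
    | zero => intro _; simpa using ht
    | succ i ih =>
      intro hj
      have hih := ih (fun j h1 h2 => hj j h1 (le_trans h2 (Nat.le_succ i)))
      have hne : t + ((i+1 : ℕ) : ZMod N) * a ≠ t := by
        intro he
        apply hj (i+1) (by omega) le_rfl
        linear_combination he
      have hstep : t + ((i+1 : ℕ) : ZMod N) * a = (t + (i : ZMod N) * a) + a := by
        push_cast; ring
      by_cases hodd : Odd i
      · have hmi : t + (i : ZMod N) * a ∈ V0 := hih.mpr hodd
        rw [hstep]
        exact iff_of_false (R1 _ hmi).2 (by simp [Nat.odd_add_one, hodd])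
      · have hni : t + (i : ZMod N) * a ∉ V0 := fun h => hodd (hih.mp h)
        have hin : (t + (i : ZMod N) * a) + a ∈ V0 := by
          by_contra h2
          have h3 := R2 _ (hstep ▸ hne) h2
          rw [add_sub_cancel_right] at h3
          exact hni h3
        rw [hstep]
        exact iff_of_true hin (Nat.odd_add_one.mpr hodd)
  have horder : ∀ k : ℕ, 0 < k → k < N → ((k:ℕ) : ZMod N) * a ≠ 0 := by
    by_contra hcon
    push_neg at hcon
    obtain ⟨k0, hk0pos, hk0lt, hk0⟩ := hcon
    have hex : ∃ k : ℕ, 0 < k ∧ ((k:ℕ) : ZMod N) * a = 0 := ⟨k0, hk0pos, hk0⟩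
    classical
    obtain ⟨m, ⟨hmpos, hma⟩, hmin, hmle⟩ :
        ∃ m : ℕ, (0 < m ∧ ((m:ℕ) : ZMod N) * a = 0) ∧
          (∀ j < m, ¬(0 < j ∧ ((j:ℕ) : ZMod N) * a = 0)) ∧ m ≤ k0 :=
      ⟨Nat.find hex, Nat.find_spec hex, fun j hj => Nat.find_min hex hj,
        Nat.find_min' hex ⟨hk0pos, hk0⟩⟩
    have hmlt : m < N := lt_of_le_of_lt hmle hk0lt
    have hm2 : 2 ≤ m := by
      rcases Nat.lt_or_ge m 2 with h | h
      · interval_cases m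
        exfalso; apply ha; simpa using hma
      · exact h
    have hmodd : m % 2 = 1 := by
      -- m divides N which is odd
      have hNa : ((N:ℕ) : ZMod N) * a = 0 := by rw [ZMod.natCast_self, zero_mul]
      have hdvd : m ∣ N := by
        have hr := Nat.div_add_mod N m
        have hra : ((N % m : ℕ) : ZMod N) * a = 0 := by
          have : ((m * (N/m) + N % m : ℕ) : ZMod N) * a = 0 := by rw [hr]; exact hNa
          push_cast at this ⊢
          linear_combination this - ((N/m : ℕ) : ZMod N) * hma
        rcases Nat.eq_zero_or_pos (N % m) with h0 | hpos
        · exact Nat.dvd_of_mod_eq_zero h0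
        · exact absurd ⟨hpos, hra⟩ (hmin _ (Nat.mod_lt _ hmpos))
      have hNodd : N % 2 = 1 := by
        have h2 : 2 ∣ 2^n := dvd_pow_self 2 (by omega)
        omega
      rcases Nat.even_or_odd m with he | ho
      · exfalso
        obtain ⟨j, hj⟩ := he
        obtain ⟨c, hc⟩ := hdvd
        have : N = 2 * (j * c) := by rw [hc, hj]; ring
        omega
      · obtain ⟨k, hk⟩ := ho; omega
    -- find x outside the coset of t
    have hexx : ∃ x : ZMod N, ∀ i ∈ Finset.range m, x ≠ t + ((i:ℕ) : ZMod N) * a := by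
      by_contra hall
      push_neg at hall
      have hsub : (Finset.univ : Finset (ZMod N)) ⊆
          (Finset.range m).image (fun i => t + ((i:ℕ) : ZMod N) * a) := by
        intro x _
        obtain ⟨i, hi, he⟩ := hall x
        exact Finset.mem_image.mpr ⟨i, hi, he.symm⟩
      have h1 := Finset.card_le_card hsub
      rw [Finset.card_univ, ZMod.card] at h1
      have h2 := Finset.card_image_le (s := Finset.range m)
        (f := fun i => t + ((i:ℕ) : ZMod N) * a)
      rw [Finset.card_range] at h2
      omega
    obtain ⟨x, hx⟩ := hexx
    have hreduce : ∀ i : ℕ, ((i:ℕ) : ZMod N) * a = ((i % m : ℕ) : ZMod N) * a := by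
      intro i
      have hr := Nat.div_add_mod i m
      have : ((m * (i/m) + i % m : ℕ) : ZMod N) * a = ((i % m : ℕ) : ZMod N) * a := by
        push_cast
        linear_combination ((i/m : ℕ) : ZMod N) * hma
      rw [hr] at this
      exact this
    have hxt : ∀ i : ℕ, x ≠ t + ((i:ℕ) : ZMod N) * a := by
      intro i he
      apply hx (i % m) (Finset.mem_range.mpr (Nat.mod_lt _ hmpos))
      rw [he, hreduce i]
    have hxt' : ∀ i : ℕ, x + ((i:ℕ) : ZMod N) * a ≠ t := by
      intro i he
      apply hxt (m - i % m)
      have h1 : i % m ≤ m := le_of_lt (Nat.mod_lt _ hmpos)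
      have h2 : ((i:ℕ) : ZMod N) * a + ((m - i % m : ℕ) : ZMod N) * a = 0 := by
        have h5 : ((i % m : ℕ) : ZMod N) + ((m - i % m : ℕ) : ZMod N) = ((m:ℕ) : ZMod N) := by
          rw [← Nat.cast_add]
          congr 1
          omega
        have h3 : ((i % m : ℕ) : ZMod N) * a + ((m - i % m : ℕ) : ZMod N) * a
            = ((m : ℕ) : ZMod N) * a := by linear_combination a * h5
        rw [hreduce i, h3, hma]
      linear_combination he - h2
    have claim2 : ∀ i : ℕ, (x + ((i:ℕ) : ZMod N) * a ∈ V0 ↔ (Even i ↔ x ∈ V0)) := by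
      intro i
      induction i with
      | zero => simp
      | succ i ih =>
        have hstep : x + ((i+1 : ℕ) : ZMod N) * a = (x + ((i:ℕ) : ZMod N) * a) + a := by
          push_cast; ring
        have flip : x + ((i+1 : ℕ) : ZMod N) * a ∈ V0 ↔ ¬ (x + ((i:ℕ) : ZMod N) * a ∈ V0) := by
          constructor
          · intro h h'
            exact (R1 _ h').2 (hstep ▸ h)
          · intro h'
            by_contra h2
            have h3 := R2 _ (hxt' (i+1)) (hstep ▸ h2)
            rw [hstep, add_sub_cancel_right] at h3
            exact h' h3
        rw [flip, ih, Nat.even_add_one]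
        tauto
      
    have hfin := claim2 m
    have hxm : x + ((m:ℕ) : ZMod N) * a = x := by rw [hma, add_zero]
    rw [hxm] at hfin
    have : ¬ Even m := by rw [Nat.even_iff]; omega
    tauto
  refine ⟨horder, ?_⟩
  -- enumeration
  have hsubinj : ∀ i j : ℕ, i ≤ j → j < N → t + ((i:ℕ) : ZMod N) * a = t + ((j:ℕ) : ZMod N) * a → i = j := by
    intro i j hij hjN he
    by_contra hne
    apply horder (j - i) (by omega) (by omega)
    have : ((j - i : ℕ) : ZMod N) = ((j:ℕ) : ZMod N) - ((i:ℕ) : ZMod N) := by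
      push_cast [Nat.cast_sub hij]; ring
    rw [this]
    linear_combination -he
  have henum : ∀ x : ZMod N, ∃ i : ℕ, i < N ∧ x = t + ((i:ℕ) : ZMod N) * a := by
    intro x
    have himg : (Finset.range N).image (fun i => t + ((i:ℕ) : ZMod N) * a) = Finset.univ := by
      apply Finset.eq_univ_of_card
      rw [Finset.card_image_of_injOn, Finset.card_range, ZMod.card]
      intro i hi j hj he
      rcases le_total i j with h | h
      · exact hsubinj i j h (Finset.mem_range.mp hj) he
      · exact (hsubinj j i h (Finset.mem_range.mp hi) he.symm).symm
    have : x ∈ (Finset.range N).image (fun i => t + ((i:ℕ) : ZMod N) * a) := by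
      rw [himg]; exact Finset.mem_univ x
    obtain ⟨i, hi, he⟩ := Finset.mem_image.mp this
    exact ⟨i, Finset.mem_range.mp hi, he.symm⟩
  have h2n : 2^n = 2 * 2^(n-1) := by
    rw [← pow_succ']
    congr 1
    omega
  intro x
  constructor
  · intro hxV
    obtain ⟨i, hiN, hxe⟩ := henum x
    have hi1 : 1 ≤ i := by
      rcases Nat.eq_zero_or_pos i with h0 | h1
      · exfalso
        rw [h0] at hxe
        simp at hxe
        rw [hxe] at hxV
        exact ht hxV
      · exact h1
    have hodd : Odd i := (claim1 i (fun j hj1 hj2 => horder j hj1 (by omega))).mp (hxe ▸ hxV)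
    obtain ⟨k, hk⟩ := hodd
    refine ⟨k, by omega, ?_⟩
    rw [hxe]
    have : i = 2*k+1 := by omega
    rw [this]
  · intro ⟨k, hk, hxe⟩
    have hlt : 2*k+1 < N := by omega
    have := (claim1 (2*k+1) (fun j hj1 hj2 => horder j hj1 (by omega))).mpr ⟨k, by ring⟩
    rw [hxe]
    exact this

lemma intdvd (N : ℕ) (hN : N ≠ 0) (a : ZMod N)
    (horder : ∀ k : ℕ, 0 < k → k < N → ((k:ℕ) : ZMod N) * a ≠ 0) :
    ∀ z : ℤ, ((z : ZMod N)) * a = 0 → (N:ℤ) ∣ z := by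
  haveI : NeZero N := ⟨hN⟩
  intro z hz
  have hN0 : (0:ℤ) < N := by positivity
  have hnn : 0 ≤ z % N := Int.emod_nonneg z (by omega)
  have hlt : z % N < N := Int.emod_lt_of_pos z hN0
  set r : ℕ := (z % N).toNat with hr
  have hrz : (r : ℤ) = z % N := Int.toNat_of_nonneg hnn
  have hrN : r < N := by omega
  have hcast : ((r : ℕ) : ZMod N) = (z : ZMod N) := by
    have h1 : ((z % (N:ℤ) : ℤ) : ZMod N) = (z : ZMod N) := by
      rw [Int.emod_def]
      push_cast
      rw [ZMod.natCast_self]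
      ring
    rw [← h1, ← hrz]
    push_cast
    rfl
  rcases Nat.eq_zero_or_pos r with h0 | hpos
  · have : z % N = 0 := by omega
    exact Int.dvd_of_emod_eq_zero this
  · exfalso
    apply horder r hpos hrN
    rw [hcast]
    exact hz

section Pair
variable (n N : ℕ)

lemma pair_core (hn : 1 ≤ n) (hN : N = 2^n+1) (a b t : ZMod N)
    (V0 V00 : Finset (ZMod N))
    (horder : ∀ k : ℕ, 0 < k → k < N → ((k:ℕ):ZMod N) * a ≠ 0)
    (hV0 : ∀ x : ZMod N, x ∈ V0 ↔ ∃ k < 2^(n-1), x = t + ((2*k+1:ℕ):ZMod N)*a)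
    (hmem2 : ∀ x : ZMod N, x ∈ V0 ↔ (x ∈ V00 ∨ x - b ∈ V00))
    (hdis2 : ∀ x : ZMod N, x ∈ V00 → x - b ∈ V00 → False)
    (d : ℕ) (hdpos : 0 < d) (hdle : d ≤ 2^(n-1))
    (hb : b = ((2*d : ℕ) : ZMod N) * a) :
    ∃ m : ℕ, 1 ≤ m ∧ m ≤ n - 1 ∧ b = ((2^m : ℕ) : ZMod N) * a := by
  have hNne : N ≠ 0 := by rw [hN]; exact Nat.succ_ne_zero _
  have h2n : (2:ℕ)^n = 2 * 2^(n-1) := by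
    rw [← pow_succ']
    congr 1
    omega
  have hzdvd := intdvd N hNne a horder
  have hNodd : ¬ Even (N:ℤ) := by
    have h2 : 2 ∣ 2^n := dvd_pow_self 2 (by omega)
    rw [Int.even_coe_nat]
    rw [Nat.even_iff]
    omega
  have hNM : (N:ℤ) = 2*((2^(n-1):ℕ):ℤ)+1 := by
    rw [hN, h2n]; push_cast; ring
  have hdiff : ∀ j k : ℕ, j < 2^(n-1) → k < 2^(n-1) →
      t + ((2*k+1:ℕ):ZMod N)*a = (t + ((2*j+1:ℕ):ZMod N)*a) + b → k = j + d := by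
    intro j k hj hk he
    have hz : ((((k:ℤ) - j - d)*2 : ℤ) : ZMod N) * a = 0 := by
      push_cast at he hb ⊢
      linear_combination he + hb
    obtain ⟨w, hw⟩ := hzdvd _ hz
    have hweven : Even w := by
      have h3 : Even ((N:ℤ)*w) := by
        rw [← hw]; exact ⟨(k:ℤ) - j - d, by ring⟩
      rcases Int.even_mul.mp h3 with h | h
      · exact absurd h hNodd
      · exact h
    obtain ⟨v, hv⟩ := hweven
    have hkd : (k:ℤ) - j - d = N * v := by
      rw [hv] at hw
      linarith
    have hjle : (j:ℤ) ≤ ((2^(n-1):ℕ):ℤ) - 1 := by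
      have : (j:ℤ) < ((2^(n-1):ℕ):ℤ) := by exact_mod_cast hj
      omega
    have hkle : (k:ℤ) ≤ ((2^(n-1):ℕ):ℤ) - 1 := by
      have : (k:ℤ) < ((2^(n-1):ℕ):ℤ) := by exact_mod_cast hk
      omega
    have hdle' : (d:ℤ) ≤ ((2^(n-1):ℕ):ℤ) := by exact_mod_cast hdle
    have hk0 : (0:ℤ) ≤ k := Int.natCast_nonneg k
    have hj0 : (0:ℤ) ≤ j := Int.natCast_nonneg j
    have hd0 : (0:ℤ) ≤ d := Int.natCast_nonneg d
    have hv0 : v = 0 := by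
      rcases lt_trichotomy v 0 with h | h | h
      · exfalso; nlinarith
      · exact h
      · exfalso; nlinarith
    rw [hv0, mul_zero] at hkd
    omega
  have hh1 : ∀ j < 2^(n-1), (t + ((2*j+1:ℕ):ZMod N)*a ∈ V00) →
      j + d < 2^(n-1) ∧ ¬ (t + ((2*(j+d)+1:ℕ):ZMod N)*a ∈ V00) := by
    intro j hj hs
    have hx0 : t + ((2*j+1:ℕ):ZMod N)*a ∈ V0 := (hV0 _).mpr ⟨j, hj, rfl⟩
    have hxb : (t + ((2*j+1:ℕ):ZMod N)*a) + b ∈ V0 :=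
      (hmem2 _).mpr (Or.inr (by rwa [add_sub_cancel_right]))
    obtain ⟨k, hk, hke⟩ := (hV0 _).mp hxb
    have hkd := hdiff j k hj hk hke.symm
    subst hkd
    refine ⟨by omega, ?_⟩
    intro hs2
    apply hdis2 ((t + ((2*j+1:ℕ):ZMod N)*a) + b)
    · rw [hke]
      exact hs2
    · rwa [add_sub_cancel_right]
  have hh2 : ∀ j < 2^(n-1), ¬ (t + ((2*j+1:ℕ):ZMod N)*a ∈ V00) →
      d ≤ j ∧ (t + ((2*(j-d)+1:ℕ):ZMod N)*a ∈ V00) := by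
    intro j hj hs
    have hx0 : t + ((2*j+1:ℕ):ZMod N)*a ∈ V0 := (hV0 _).mpr ⟨j, hj, rfl⟩
    rcases (hmem2 _).mp hx0 with h | h
    · exact absurd h hs
    · have hxb : (t + ((2*j+1:ℕ):ZMod N)*a) - b ∈ V0 := (hmem2 _).mpr (Or.inl h)
      obtain ⟨k, hk, hke⟩ := (hV0 _).mp hxb
      have hkd := hdiff k j hk hj (by linear_combination hke)
      have hd : d ≤ j := by omega
      refine ⟨hd, ?_⟩
      have hkj : k = j - d := by omega
      rw [← hkj]
      rw [← hke]
      exact h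
  obtain ⟨hdvd, hdiv2⟩ := matching_lemma (2^(n-1)) d hdpos hdle
    (fun j => t + ((2*j+1:ℕ):ZMod N)*a ∈ V00) hh1 hh2
  obtain ⟨kk, hkkle, hkkeq⟩ := (Nat.dvd_prime_pow Nat.prime_two).mp hdvd
  have hdivval : 2^(n-1) / d = 2^(n-1-kk) := by
    rw [hkkeq, Nat.pow_div hkkle (by omega)]
  have hkk2 : 1 ≤ n - 1 - kk := by
    by_contra hcon
    push_neg at hcon
    have h0 : n - 1 - kk = 0 := by omega
    rw [hdivval, h0] at hdiv2
    simp at hdiv2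
  refine ⟨kk+1, by omega, by omega, ?_⟩
  rw [hb]
  congr 2
  rw [hkkeq]
  ring
end Pair

lemma pair_lemma (n N : ℕ) (hn : 1 ≤ n) (hN : N = 2^n+1) (a b t : ZMod N)
    (V0 V00 : Finset (ZMod N))
    (horder : ∀ k : ℕ, 0 < k → k < N → ((k:ℕ):ZMod N) * a ≠ 0)
    (hV0 : ∀ x : ZMod N, x ∈ V0 ↔ ∃ k < 2^(n-1), x = t + ((2*k+1:ℕ):ZMod N)*a)
    (hmem2 : ∀ x : ZMod N, x ∈ V0 ↔ (x ∈ V00 ∨ x - b ∈ V00))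
    (hdis2 : ∀ x : ZMod N, x ∈ V00 → x - b ∈ V00 → False) :
    ∃ m : ℕ, 1 ≤ m ∧ m ≤ n - 1 ∧
      (b = ((2^m : ℕ) : ZMod N) * a ∨ b = -(((2^m : ℕ) : ZMod N) * a)) := by
  have hNne : N ≠ 0 := by rw [hN]; exact Nat.succ_ne_zero _
  haveI : NeZero N := ⟨hNne⟩
  have h2n : (2:ℕ)^n = 2 * 2^(n-1) := by
    rw [← pow_succ']; congr 1; omega
  have hNodd : N % 2 = 1 := by
    have h2 : 2 ∣ 2^n := dvd_pow_self 2 (by omega)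
    omega
  have hN3 : 3 ≤ N := by
    have : 2 ≤ 2^n := Nat.one_lt_two_pow_iff.mpr (by omega)
    omega
  -- b ≠ 0
  have hb0 : b ≠ 0 := by
    intro h0
    have hx0 : t + ((2*0+1:ℕ):ZMod N)*a ∈ V0 := (hV0 _).mpr ⟨0, by positivity, rfl⟩
    rcases (hmem2 _).mp hx0 with h | h
    · exact hdis2 _ h (by rw [h0, sub_zero]; exact h)
    · rw [h0, sub_zero] at h
      exact hdis2 _ h (by rw [h0, sub_zero]; exact h)
  -- a is invertible
  have hcop : Nat.Coprime (ZMod.val a) N := by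
    by_contra hg
    set g := Nat.gcd (ZMod.val a) N with hgdef
    have hgN : g ∣ N := Nat.gcd_dvd_right _ _
    have hga : g ∣ ZMod.val a := Nat.gcd_dvd_left _ _
    have hgpos : 0 < g := Nat.gcd_pos_of_pos_right _ (by omega)
    have hg2 : 2 ≤ g := by
      by_contra hlt
      push_neg at hlt
      have hg1 : g = 1 := by omega
      have : Nat.gcd (ZMod.val a) N = 1 := by rw [← hgdef]; exact hg1
      exact hg this
    obtain ⟨Ng, hNg⟩ := hgN
    obtain ⟨av, hav⟩ := hga
    have hNgpos : 0 < Ng := by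
      rcases Nat.eq_zero_or_pos Ng with h | h
      · rw [h, Nat.mul_zero] at hNg; omega
      · exact h
    have hNglt : Ng < N := by
      rcases Nat.lt_or_ge Ng N with h | h
      · exact h
      · exfalso; nlinarith
    apply horder Ng hNgpos hNglt
    have ha' : ((ZMod.val a : ℕ) : ZMod N) = a := by
      rw [ZMod.natCast_val, ZMod.cast_id]
    have : ((Ng:ℕ) : ZMod N) * a = ((Ng * ZMod.val a : ℕ) : ZMod N) := by
      push_cast [ha']
      ring
    rw [this]
    have heq : Ng * ZMod.val a = N * av := by
      rw [hav, hNg]; ring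
    rw [heq]
    push_cast [ZMod.natCast_self]
    ring
  set u : (ZMod N)ˣ := ZMod.unitOfCoprime (ZMod.val a) hcop with hu
  have hua : (u : ZMod N) = a := by
    rw [hu, ZMod.coe_unitOfCoprime, ZMod.natCast_val, ZMod.cast_id]
  set c : ZMod N := ((u⁻¹ : (ZMod N)ˣ) : ZMod N) with hc
  have hac : a * c = 1 := by
    rw [← hua, hc, ← Units.val_mul, mul_inv_cancel, Units.val_one]
  set v : ℕ := ZMod.val (b * c) with hv
  have hvc : ((v:ℕ) : ZMod N) = b * c := by
    rw [hv, ZMod.natCast_val, ZMod.cast_id]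
  have hvN : v < N := ZMod.val_lt _
  have hv0 : v ≠ 0 := by
    intro h0
    apply hb0
    have : b * c = 0 := by rw [← hvc, h0]; simp
    calc b = b * (c * a) := by rw [mul_comm c a, hac, mul_one]
    _ = (b * c) * a := by ring
    _ = 0 := by rw [this, zero_mul]
  have hbca : b = ((v:ℕ) : ZMod N) * a := by
    rw [hvc]
    calc b = b * (c * a) := by rw [mul_comm c a, hac, mul_one]
    _ = (b * c) * a := by ring
  rcases Nat.even_or_odd v with hve | hvo
  · -- δ = v > 0 : direct case
    obtain ⟨d, hd⟩ := hve
    have hdeq : v = 2 * d := by omega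
    have hdpos : 0 < d := by omega
    have hdle : d ≤ 2^(n-1) := by omega
    obtain ⟨m, hm1, hm2, hme⟩ := pair_core n N hn hN a b t V0 V00 horder hV0 hmem2 hdis2
      d hdpos hdle (by rw [hbca, hdeq])
    exact ⟨m, hm1, hm2, Or.inl hme⟩
  · -- δ = v - N < 0 : apply to -b with shifted V00
    set V00' : Finset (ZMod N) := V00.image (· + b) with hV00'
    have hmemim : ∀ x : ZMod N, x ∈ V00' ↔ x - b ∈ V00 := by
      intro x
      rw [hV00', Finset.mem_image]
      constructor
      · rintro ⟨y, hy, rfl⟩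
        simpa [add_sub_cancel_right] using hy
      · intro h
        exact ⟨x - b, h, by ring⟩
    have hmem2' : ∀ x : ZMod N, x ∈ V0 ↔ (x ∈ V00' ∨ x - (-b) ∈ V00') := by
      intro x
      rw [hmem2 x, hmemim, hmemim]
      have : x - -b - b = x := by ring
      rw [this]
      tauto
    have hdis2' : ∀ x : ZMod N, x ∈ V00' → x - (-b) ∈ V00' → False := by
      intro x h1 h2
      rw [hmemim] at h1 h2
      have e : x - -b - b = x := by ring
      rw [e] at h2
      exact hdis2 x h2 h1
    have hN' : N = 2 * 2^(n-1) + 1 := by rw [hN, h2n]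
    obtain ⟨w, hw⟩ := hvo
    have hd2 : 2 ∣ (N - v) := by omega
    obtain ⟨d, hd⟩ := hd2
    have hdpos : 0 < d := by omega
    have hdle : d ≤ 2^(n-1) := by omega
    have hnegb : -b = ((2*d : ℕ) : ZMod N) * a := by
      have h1 : ((N - v : ℕ) : ZMod N) = -((v:ℕ) : ZMod N) := by
        have h2 : ((N - v + v : ℕ) : ZMod N) = 0 := by
          rw [Nat.sub_add_cancel (le_of_lt hvN), ZMod.natCast_self]
        push_cast at h2
        linear_combination h2
      rw [← hd, h1, hbca]
      ring
    obtain ⟨m, hm1, hm2, hme⟩ := pair_core n N hn hN a (-b) t V0 V00' horder hV0 hmem2' hdis2'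
      d hdpos hdle hnegb
    refine ⟨m, hm1, hm2, Or.inr ?_⟩
    linear_combination -hme

lemma coprime_of_order (N : ℕ) (hNne : N ≠ 0) (a : ZMod N)
    (horder : ∀ k : ℕ, 0 < k → k < N → ((k:ℕ):ZMod N) * a ≠ 0) :
    Nat.Coprime (ZMod.val a) N := by
  haveI : NeZero N := ⟨hNne⟩
  by_contra hg
  set g := Nat.gcd (ZMod.val a) N with hgdef
  have hgN : g ∣ N := Nat.gcd_dvd_right _ _
  have hga : g ∣ ZMod.val a := Nat.gcd_dvd_left _ _
  have hgpos : 0 < g := Nat.gcd_pos_of_pos_right _ (by omega)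
  have hg2 : 2 ≤ g := by
    by_contra hlt
    push_neg at hlt
    have hg1 : g = 1 := by omega
    have : Nat.gcd (ZMod.val a) N = 1 := by rw [← hgdef]; exact hg1
    exact hg this
  obtain ⟨Ng, hNg⟩ := hgN
  obtain ⟨av, hav⟩ := hga
  have hNgpos : 0 < Ng := by
    rcases Nat.eq_zero_or_pos Ng with h | h
    · rw [h, Nat.mul_zero] at hNg; omega
    · exact h
  have hNglt : Ng < N := by
    rcases Nat.lt_or_ge Ng N with h | h
    · exact h
    · exfalso; nlinarith
  apply horder Ng hNgpos hNglt
  have ha' : ((ZMod.val a : ℕ) : ZMod N) = a := by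
    rw [ZMod.natCast_val, ZMod.cast_id]
  have h5 : ((Ng:ℕ) : ZMod N) * a = ((Ng * ZMod.val a : ℕ) : ZMod N) := by
    push_cast [ha']
    ring
  rw [h5]
  have heq : Ng * ZMod.val a = N * av := by
    rw [hav, hNg]; ring
  rw [heq]
  push_cast [ZMod.natCast_self]
  ring

lemma forward (n N : ℕ) (hn : 1 ≤ n) (hN : N = 2^n+1) (A : Finset ℕ)
    (hcard : A.card = n) (hA : SumsetDistinctMod N A) :
    ∃ lam : ℤ, Int.gcd lam N = 1 ∧ ∃ ε : ℕ → ℤ, (∀ i < n, ε i = 1 ∨ ε i = -1) ∧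
      A.image (fun a : ℕ => (a : ZMod N)) =
        (Finset.range n).image (fun i => (ε i : ZMod N) * (lam : ZMod N) * 2 ^ i) := by
  classical
  have hNne : N ≠ 0 := by rw [hN]; exact Nat.succ_ne_zero _
  haveI : NeZero N := ⟨hNne⟩
  have h2n : (2:ℕ)^n = 2 * 2^(n-1) := by
    rw [← pow_succ']; congr 1; omega
  have hN3 : 3 ≤ N := by
    have : 2 ≤ 2^n := Nat.one_lt_two_pow_iff.mpr (by omega)
    omega
  set V : Finset ℕ → Finset (ZMod N) :=
    fun S => S.powerset.image (fun B => ((∑ x ∈ B, x : ℕ) : ZMod N)) with hV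
  have hinj : ∀ B ⊆ A, ∀ C ⊆ A,
      ((∑ x ∈ B, x : ℕ) : ZMod N) = ((∑ x ∈ C, x : ℕ) : ZMod N) → B = C := by
    intro B hB C hC h
    exact hA B hB C hC ((ZMod.natCast_eq_natCast_iff _ _ _).mp h)
  have hsplit : ∀ S : Finset ℕ, S ⊆ A → ∀ a ∈ S,
      (∀ x : ZMod N, x ∈ V S ↔
        (x ∈ V (S.erase a) ∨ x - ((a:ℕ):ZMod N) ∈ V (S.erase a))) ∧
      (∀ x : ZMod N, x ∈ V (S.erase a) → x - ((a:ℕ):ZMod N) ∈ V (S.erase a) → False) := by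
    intro S hSA a haS
    constructor
    · intro x
      constructor
      · intro hx
        obtain ⟨B, hB, hBx⟩ := Finset.mem_image.mp hx
        rw [Finset.mem_powerset] at hB
        by_cases hab : a ∈ B
        · right
          have hsum : (∑ x ∈ B.erase a, x) + a = ∑ x ∈ B, x := Finset.sum_erase_add B _ hab
          have he : x - ((a:ℕ):ZMod N) = ((∑ x ∈ B.erase a, x : ℕ) : ZMod N) := by
            rw [← hBx, ← hsum]; push_cast; ring
          rw [he]
          exact Finset.mem_image.mpr ⟨B.erase a,
            Finset.mem_powerset.mpr (Finset.erase_subset_erase a hB), rfl⟩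
        · left
          refine Finset.mem_image.mpr ⟨B, Finset.mem_powerset.mpr ?_, hBx⟩
          intro y hy
          exact Finset.mem_erase.mpr ⟨fun h => hab (h ▸ hy), hB hy⟩
      · intro h
        rcases h with h | h
        · obtain ⟨B, hB, hBx⟩ := Finset.mem_image.mp h
          rw [Finset.mem_powerset] at hB
          exact Finset.mem_image.mpr ⟨B, Finset.mem_powerset.mpr
            (hB.trans (Finset.erase_subset a S)), hBx⟩
        · obtain ⟨C, hC, hCx⟩ := Finset.mem_image.mp h
          rw [Finset.mem_powerset] at hC
          have haC : a ∉ C := fun hc => (Finset.mem_erase.mp (hC hc)).1 rfl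
          refine Finset.mem_image.mpr ⟨insert a C, Finset.mem_powerset.mpr ?_, ?_⟩
          · intro y hy
            rcases Finset.mem_insert.mp hy with h' | h'
            · exact h' ▸ haS
            · exact (Finset.erase_subset a S) (hC h')
          · rw [Finset.sum_insert haC]
            push_cast
            push_cast at hCx
            linear_combination hCx
    · intro x h1 h2
      obtain ⟨B, hB, hBx⟩ := Finset.mem_image.mp h1
      obtain ⟨C, hC, hCx⟩ := Finset.mem_image.mp h2
      rw [Finset.mem_powerset] at hB hC
      have haC : a ∉ C := fun hc => (Finset.mem_erase.mp (hC hc)).1 rfl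
      have hBA : B ⊆ A := hB.trans ((Finset.erase_subset a S).trans hSA)
      have hCA : insert a C ⊆ A := by
        intro y hy
        rcases Finset.mem_insert.mp hy with h' | h'
        · exact h' ▸ (hSA haS)
        · exact ((Finset.erase_subset a S).trans hSA) (hC h')
      have hsums : ((∑ x ∈ B, x : ℕ) : ZMod N) = ((∑ x ∈ insert a C, x : ℕ) : ZMod N) := by
        rw [Finset.sum_insert haC]
        push_cast
        push_cast at hCx hBx
        linear_combination hBx - hCx
      have hBC := hinj B hBA (insert a C) hCA hsums
      have : a ∈ B := hBC ▸ Finset.mem_insert_self a C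
      exact (Finset.mem_erase.mp (hB this)).1 rfl
  -- the missing residue t
  have hcardV : (V A).card = 2^n := by
    rw [hV]
    rw [Finset.card_image_of_injOn, Finset.card_powerset, hcard]
    intro B hB C hC h
    exact hinj B (Finset.mem_powerset.mp (Finset.mem_coe.mp hB)) C
      (Finset.mem_powerset.mp (Finset.mem_coe.mp hC)) h
  obtain ⟨t, htv⟩ : ∃ t : ZMod N, ∀ x : ZMod N, x ≠ t ↔ x ∈ V A := by
    have hcompl : (V A)ᶜ.card = 1 := by
      rw [Finset.card_compl, hcardV, ZMod.card, hN]
      omega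
    obtain ⟨t, ht⟩ := Finset.card_eq_one.mp hcompl
    refine ⟨t, fun x => ?_⟩
    constructor
    · intro hx
      by_contra h
      have : x ∈ (V A)ᶜ := Finset.mem_compl.mpr h
      rw [ht] at this
      exact hx (Finset.mem_singleton.mp this)
    · intro hx he
      have : t ∈ (V A)ᶜ := by rw [ht]; exact Finset.mem_singleton_self t
      exact (Finset.mem_compl.mp this) (he ▸ hx)
  -- structure for each element
  have hstruct : ∀ a ∈ A,
      (∀ k : ℕ, 0 < k → k < N → ((k:ℕ):ZMod N) * ((a:ℕ):ZMod N) ≠ 0) ∧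
      (∀ x : ZMod N, x ∈ V (A.erase a) ↔
        ∃ k < 2^(n-1), x = t + ((2*k+1:ℕ):ZMod N) * ((a:ℕ):ZMod N)) := by
    intro a ha
    obtain ⟨hm, hd⟩ := hsplit A (Finset.Subset.refl A) a ha
    exact cycle_lemma n N hn hN ((a:ℕ):ZMod N) t (V (A.erase a))
      (fun x => (htv x).trans (hm x)) hd
  have hpair : ∀ a ∈ A, ∀ b ∈ A, a ≠ b → ∃ m : ℕ, 1 ≤ m ∧ m ≤ n - 1 ∧
      (((b:ℕ):ZMod N) = ((2^m : ℕ) : ZMod N) * ((a:ℕ):ZMod N) ∨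
       ((b:ℕ):ZMod N) = -(((2^m : ℕ) : ZMod N) * ((a:ℕ):ZMod N))) := by
    intro a ha b hb hab
    have hbe : b ∈ A.erase a := Finset.mem_erase.mpr ⟨fun h => hab h.symm, hb⟩
    obtain ⟨hm2, hd2⟩ := hsplit (A.erase a) (Finset.erase_subset a A) b hbe
    exact pair_lemma n N hn hN ((a:ℕ):ZMod N) ((b:ℕ):ZMod N) t
      (V (A.erase a)) (V ((A.erase a).erase b))
      (hstruct a ha).1 (hstruct a ha).2 hm2 hd2
  -- injectivity of reduction mod N on A
  have hine0 : ∀ a ∈ A, ((a:ℕ):ZMod N) ≠ 0 := by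
    intro a ha h0
    have h1 : ({a} : Finset ℕ) = (∅ : Finset ℕ) := by
      apply hinj _ (Finset.singleton_subset_iff.mpr ha) _ (Finset.empty_subset A)
      rw [Finset.sum_singleton, Finset.sum_empty]
      rw [h0]
      simp
    simpa using h1
  have hiinj : ∀ a ∈ A, ∀ b ∈ A, ((a:ℕ):ZMod N) = ((b:ℕ):ZMod N) → a = b := by
    intro a ha b hb h
    have h1 : ({a} : Finset ℕ) = ({b} : Finset ℕ) := by
      apply hinj _ (Finset.singleton_subset_iff.mpr ha) _ (Finset.singleton_subset_iff.mpr hb)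
      rw [Finset.sum_singleton, Finset.sum_singleton]
      exact h
    exact Finset.singleton_inj.mp h1
  have hneginj : ∀ a ∈ A, ∀ b ∈ A, ((a:ℕ):ZMod N) = -((b:ℕ):ZMod N) → False := by
    intro a ha b hb h
    by_cases hab : a = b
    · subst hab
      apply (hstruct a ha).1 2 (by omega) (by omega)
      push_cast
      linear_combination h
    · have h1 : ({a, b} : Finset ℕ) = (∅ : Finset ℕ) := by
        apply hinj _ ?_ _ (Finset.empty_subset A)
        · rw [Finset.sum_pair hab, Finset.sum_empty]
          push_cast
          linear_combination h
        · intro y hy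
          rcases Finset.mem_insert.mp hy with h' | h'
          · exact h' ▸ ha
          · exact (Finset.mem_singleton.mp h') ▸ hb
      have : a ∈ ({a, b} : Finset ℕ) := Finset.mem_insert_self a {b}
      rw [h1] at this
      simp at this
  -- base point
  obtain ⟨a0, ha0⟩ := Finset.card_pos.mp (by omega : 0 < A.card)
  set lam : ℤ := (ZMod.val ((a0:ℕ) : ZMod N) : ℤ) with hlam
  have hlamc : ((lam : ℤ) : ZMod N) = ((a0:ℕ):ZMod N) := by
    rw [hlam]
    push_cast
    rw [ZMod.natCast_val, ZMod.cast_id]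
  have hcop : Nat.Coprime (ZMod.val ((a0:ℕ):ZMod N)) N :=
    coprime_of_order N hNne _ (hstruct a0 ha0).1
  have hgcd : Int.gcd lam N = 1 := by
    rw [hlam, Int.gcd_natCast_natCast]
    exact hcop
  -- representation of each element
  have hrep : ∀ b : ℕ, ∃ i : ℕ, ∃ e : ℤ, b ∈ A → (i < n ∧ (e = 1 ∨ e = -1) ∧
      ((b:ℕ):ZMod N) = (e : ZMod N) * (lam : ZMod N) * 2 ^ i) := by
    intro b
    by_cases hb : b ∈ A
    · by_cases hba : b = a0
      · refine ⟨0, 1, fun _ => ⟨by omega, Or.inl rfl, ?_⟩⟩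
        rw [hlamc, hba]
        push_cast
        ring
      · obtain ⟨m, hm1, hm2, hor⟩ := hpair a0 ha0 b hb (fun h => hba h.symm)
        rcases hor with he | he
        · refine ⟨m, 1, fun _ => ⟨by omega, Or.inl rfl, ?_⟩⟩
          rw [he, hlamc]
          push_cast
          ring
        · refine ⟨m, -1, fun _ => ⟨by omega, Or.inr rfl, ?_⟩⟩
          rw [he, hlamc]
          push_cast
          ring
    · exact ⟨0, 1, fun h => absurd h hb⟩
  choose idx sgn hspec using hrep
  have hidxinj : ∀ a ∈ A, ∀ b ∈ A, idx a = idx b → a = b := by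
    intro a ha b hb hie
    obtain ⟨_, hsa, hea⟩ := hspec a ha
    obtain ⟨_, hsb, heb⟩ := hspec b hb
    rw [hie] at hea
    rcases hsa with h1 | h1 <;> rcases hsb with h2 | h2
    · apply hiinj a ha b hb
      rw [hea, heb, h1, h2]
    · exfalso
      apply hneginj a ha b hb
      rw [hea, heb, h1, h2]
      push_cast
      ring
    · exfalso
      apply hneginj a ha b hb
      rw [hea, heb, h1, h2]
      push_cast
      ring
    · apply hiinj a ha b hb
      rw [hea, heb, h1, h2]
  have hidximg : A.image idx = Finset.range n := by
    apply Finset.eq_of_subset_of_card_le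
    · intro i hi
      obtain ⟨b, hb, hbi⟩ := Finset.mem_image.mp hi
      exact Finset.mem_range.mpr (hbi ▸ (hspec b hb).1)
    · rw [Finset.card_range, Finset.card_image_of_injOn, hcard]
      intro a ha b hb h
      exact hidxinj a (Finset.mem_coe.mp ha) b (Finset.mem_coe.mp hb) h
  set ε : ℕ → ℤ := fun i => if h : ∃ b ∈ A, idx b = i then sgn h.choose else 1 with hε
  have hεval : ∀ b ∈ A, ε (idx b) = sgn b := by
    intro b hb
    have hex : ∃ c ∈ A, idx c = idx b := ⟨b, hb, rfl⟩
    rw [hε]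
    simp only [dif_pos hex]
    obtain ⟨hcA, hci⟩ := hex.choose_spec
    congr 1
    exact hidxinj _ hcA _ hb hci
  refine ⟨lam, hgcd, ε, ?_, ?_⟩
  · intro i hi
    rw [hε]
    by_cases hex : ∃ b ∈ A, idx b = i
    · simp only [dif_pos hex]
      exact (hspec hex.choose hex.choose_spec.1).2.1
    · simp [dif_neg hex]
  · ext y
    simp only [Finset.mem_image]
    constructor
    · rintro ⟨b, hb, rfl⟩
      refine ⟨idx b, Finset.mem_range.mpr (hspec b hb).1, ?_⟩
      rw [hεval b hb]
      exact ((hspec b hb).2.2).symm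
    · rintro ⟨i, hi, rfl⟩
      have : i ∈ A.image idx := hidximg ▸ hi
      obtain ⟨b, hb, hbi⟩ := Finset.mem_image.mp this
      refine ⟨b, hb, ?_⟩
      subst hbi
      rw [hεval b hb]
      exact (hspec b hb).2.2


theorem stmt4 (n : ℕ) (hn : 1 ≤ n) (N : ℕ) (hN : N = 2 ^ n + 1)
    (A : Finset ℕ) (hpos : ∀ a ∈ A, 0 < a) (hcard : A.card = n) :
    SumsetDistinctMod N A ↔
      ∃ lam : ℤ, Int.gcd lam N = 1 ∧ ∃ ε : ℕ → ℤ, (∀ i < n, ε i = 1 ∨ ε i = -1) ∧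
        A.image (fun a : ℕ => (a : ZMod N)) =
          (Finset.range n).image (fun i => (ε i : ZMod N) * (lam : ZMod N) * 2 ^ i) := by
  constructor
  · intro hA
    exact forward n N hn hN A hcard hA
  · rintro ⟨lam, hlam, ε, hε, himg⟩
    exact backward hn hN A hcard lam hlam ε hε himg
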